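/- Let φ be a continuous flow on a compact metric space and suppose (x_n) is a sequence of points with φ_{t_n}(x_n) = x_n where t_n → 0⁺, and x_n → x₀. Then x₀ is a fixed point of φ. -/

import Mathlib

theorem stmt18 {X : Type*} [MetricSpace X] [CompactSpace X]
    (φ : ℝ → X → X)
    (hcont : Continuous fun p : ℝ × X => φ p.1 p.2)
    (h0 : ∀ x, φ 0 x = x)
    (hadd : ∀ t s x, φ (t + s) x = φ t (φ s x))
    (x : ℕ → X) (t : ℕ → ℝ) (x₀ : X)
    (ht_pos : ∀ n, 0 < t n)
    (ht_lim : Filter.Tendsto t Filter.atTop (nhds 0))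
    (hper : ∀ n, φ (t n) (x n) = x n)
    (hx_lim : Filter.Tendsto x Filter.atTop (nhds x₀)) :
    ∀ s : ℝ, φ s x₀ = x₀ := by
  -- integer multiples of the period fix x n
  have hk : ∀ (n : ℕ) (k : ℤ), φ (k * t n) (x n) = x n := by
    intro n k
    induction k using Int.induction_on with
    | zero => simpa using h0 (x n)
    | succ m ih =>
        have h1 : ((m : ℤ) + 1 : ℤ) * t n = t n + (m : ℤ) * t n := by push_cast; ring
        rw [h1, hadd, ih, hper]
    | pred m ih =>
        push_cast at ih ⊢
        have h1 : (-(m:ℝ) - 1) * t n = -(t n) + (-(m:ℝ) * t n) := by ring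
        rw [h1, hadd, ih]
        nth_rewrite 1 [← hper n]
        rw [← hadd, neg_add_cancel, h0]
  intro s
  set r : ℕ → ℝ := fun n => Int.fract (s / t n) * t n with hr
  have hr0 : ∀ n, 0 ≤ r n := fun n =>
    mul_nonneg (Int.fract_nonneg _) (ht_pos n).le
  have hr1 : ∀ n, r n ≤ t n := fun n =>
    mul_le_of_le_one_left (ht_pos n).le (Int.fract_lt_one _).le
  have hr_lim : Filter.Tendsto r Filter.atTop (nhds 0) :=
    squeeze_zero hr0 hr1 ht_lim
  have key : ∀ n, φ s (x n) = φ (r n) (x n) := by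
    intro n
    have hs : r n + ⌊s / t n⌋ * t n = s := by
      rw [hr, ← add_mul, Int.fract_add_floor, div_mul_cancel₀ _ (ht_pos n).ne']
    rw [← hs, hadd, hk]
  have lim1 : Filter.Tendsto (fun n => φ s (x n)) Filter.atTop (nhds (φ s x₀)) := by
    have : Filter.Tendsto (fun n => ((s, x n) : ℝ × X)) Filter.atTop (nhds (s, x₀)) :=
      (tendsto_const_nhds).prodMk_nhds hx_lim
    exact (hcont.tendsto (s, x₀)).comp this
  have lim2 : Filter.Tendsto (fun n => φ s (x n)) Filter.atTop (nhds x₀) := by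
    have h' : Filter.Tendsto (fun n => ((r n, x n) : ℝ × X)) Filter.atTop (nhds (0, x₀)) :=
      hr_lim.prodMk_nhds hx_lim
    have := (hcont.tendsto (0, x₀)).comp h'
    simp only [Function.comp, h0] at this
    simpa [key, Function.comp_def] using this
  exact tendsto_nhds_unique lim1 lim2
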